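/- The function h(x) = x e^x E₁(x) is strictly increasing on (0, ∞), with h(x) → 0 as x → 0⁺ and h(x) → 1 as x → ∞. -/

import Mathlib

open Real MeasureTheory Filter Set Topology

noncomputable def E1 (a : ℝ) : ℝ := ∫ t in Set.Ioi a, Real.exp (-t) / t

lemma contOn {x : ℝ} (hx : 0 < x) :
    ContinuousOn (fun t : ℝ => Real.exp (-t) / t) (Set.Ici x) := by
  apply ContinuousOn.div
  · exact (Real.continuous_exp.comp continuous_neg).continuousOn
  · exact continuousOn_id
  · intro t ht; exact ne_of_gt (lt_of_lt_of_le hx ht)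

lemma intOn {x : ℝ} (hx : 0 < x) :
    IntegrableOn (fun t : ℝ => Real.exp (-t) / t) (Set.Ioi x) := by
  have h1 : IntegrableOn (fun t : ℝ => Real.exp (-t)) (Set.Ioi x) := by
    simpa using exp_neg_integrableOn_Ioi x (b := 1) one_pos
  refine ((h1.const_mul (1 / x)).mono' ?_ ?_)
  · exact (((contOn hx).mono Ioi_subset_Ici_self).aestronglyMeasurable measurableSet_Ioi)
  · filter_upwards [ae_restrict_mem measurableSet_Ioi] with t ht
    have ht0 : 0 < t := lt_trans hx ht
    rw [Real.norm_eq_abs, abs_of_nonneg (by positivity), one_div, mul_comm,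
      div_le_iff₀ ht0, mul_comm (Real.exp (-t)), mul_assoc]
    have hxt : x < t := ht
    have h2 : (1:ℝ) ≤ x⁻¹ * t := by
      rw [inv_mul_eq_div, le_div_iff₀ hx]; linarith
    nlinarith [Real.exp_pos (-t)]

lemma E1_nonneg {x : ℝ} (hx : 0 < x) : 0 ≤ E1 x := by
  apply setIntegral_nonneg measurableSet_Ioi
  intro t ht
  have : 0 < t := lt_trans hx ht
  positivity

lemma E1_le {x : ℝ} (hx : 0 < x) : E1 x ≤ Real.exp (-x) / x := by
  have h1 : IntegrableOn (fun t : ℝ => Real.exp (-t)) (Set.Ioi x) := by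
    simpa using exp_neg_integrableOn_Ioi x (b := 1) one_pos
  have : E1 x ≤ ∫ t in Set.Ioi x, Real.exp (-t) * (1/x) := by
    apply setIntegral_mono_on (intOn hx) (h1.mul_const _) measurableSet_Ioi
    intro t ht
    have ht0 : 0 < t := lt_trans hx ht
    rw [div_eq_mul_one_div]
    have ht0' := le_of_lt (Set.mem_Ioi.mp ht)
    gcongr
  calc E1 x ≤ _ := this
    _ = Real.exp (-x) / x := by
        rw [integral_mul_const, integral_exp_neg_Ioi]; ring

lemma contOn' : ContinuousOn (fun t : ℝ => Real.exp (-t) / t) (Set.Ioi 0) := by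
  apply ContinuousOn.div
  · exact (Real.continuous_exp.comp continuous_neg).continuousOn
  · exact continuousOn_id
  · intro t ht; exact ne_of_gt ht

lemma E1_split {a b : ℝ} (ha : 0 < a) (hab : a ≤ b) :
    E1 a = (∫ t in Set.Ioc a b, Real.exp (-t) / t) + E1 b := by
  rw [E1, E1, ← setIntegral_union Ioc_disjoint_Ioi_same measurableSet_Ioi
      ((intOn ha).mono_set Ioc_subset_Ioi_self)
      ((intOn ha).mono_set (Ioi_subset_Ioi hab)), Ioc_union_Ioi_eq_Ioi hab]

lemma E1_eq {x : ℝ} (hx : 0 < x) :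
    E1 x = E1 1 - ∫ t in (1:ℝ)..x, Real.exp (-t) / t := by
  rcases le_total x 1 with h | h
  · rw [intervalIntegral.integral_symm, intervalIntegral.integral_of_le h]
    have := E1_split hx h
    linarith [this]
  · rw [intervalIntegral.integral_of_le h]
    have := E1_split one_pos h
    linarith [this]

lemma hasDerivAt_E1 {x : ℝ} (hx : 0 < x) :
    HasDerivAt E1 (-(Real.exp (-x) / x)) x := by
  have hmin : 0 < min 1 x := lt_min one_pos hx
  have key : HasDerivAt (fun u => ∫ t in (1:ℝ)..u, Real.exp (-t) / t)
      (Real.exp (-x) / x) x := by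
    apply intervalIntegral.integral_hasDerivAt_right
    · apply ContinuousOn.intervalIntegrable
      apply (contOn hmin).mono
      exact fun t ht => ht.1
    · exact contOn'.stronglyMeasurableAtFilter isOpen_Ioi x hx
    · exact contOn'.continuousAt (Ioi_mem_nhds hx)
  have key2 : HasDerivAt (fun u => E1 1 - ∫ t in (1:ℝ)..u, Real.exp (-t) / t)
      (-(Real.exp (-x) / x)) x := key.const_sub _
  apply key2.congr_of_eventuallyEq
  filter_upwards [Ioi_mem_nhds hx] with u hu
  exact E1_eq hu

lemma E1_tendsto_zero : Tendsto E1 atTop (𝓝 0) := by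
  have hupper : Tendsto (fun x : ℝ => Real.exp (-x) / x) atTop (𝓝 0) := by
    have h1 : Tendsto (fun x : ℝ => Real.exp (-x)) atTop (𝓝 0) :=
      Real.tendsto_exp_neg_atTop_nhds_zero
    have h2 : Tendsto (fun x : ℝ => x⁻¹) atTop (𝓝 0) := tendsto_inv_atTop_zero
    simpa [div_eq_mul_inv] using h1.mul h2
  apply tendsto_of_tendsto_of_tendsto_of_le_of_le' tendsto_const_nhds hupper
  · filter_upwards [eventually_gt_atTop (0:ℝ)] with x hx using E1_nonneg hx
  · filter_upwards [eventually_gt_atTop (0:ℝ)] with x hx using E1_le hx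

noncomputable def G : ℝ → ℝ := fun x => E1 x - Real.exp (-x) / (1 + x)

lemma hasDerivAt_G {x : ℝ} (hx : 0 < x) :
    HasDerivAt G (-(Real.exp (-x) / x) -
      ((-Real.exp (-x) * (1 + x) - Real.exp (-x) * 1) / (1 + x) ^ 2)) x := by
  have h1 : HasDerivAt (fun y : ℝ => Real.exp (-y)) (-Real.exp (-x)) x := by
    simpa [Function.comp_def] using (Real.hasDerivAt_exp (-x)).comp x ((hasDerivAt_id x).neg)
  have h2 : HasDerivAt (fun y : ℝ => 1 + y) 1 x := by
    simpa using (hasDerivAt_id x).const_add 1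
  have h3 : HasDerivAt (fun y : ℝ => Real.exp (-y) / (1 + y))
      ((-Real.exp (-x) * (1 + x) - Real.exp (-x) * 1) / (1 + x) ^ 2) x :=
    h1.div h2 (by positivity)
  exact (hasDerivAt_E1 hx).sub h3

lemma G_deriv_neg {x : ℝ} (hx : 0 < x) :
    -(Real.exp (-x) / x) -
      ((-Real.exp (-x) * (1 + x) - Real.exp (-x) * 1) / (1 + x) ^ 2) < 0 := by
  have he : 0 < Real.exp (-x) := Real.exp_pos _
  have h1x : (0:ℝ) < 1 + x := by linarith
  have key : (-Real.exp (-x) * (1 + x) - Real.exp (-x) * 1) / (1 + x) ^ 2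
      = -(Real.exp (-x) * (2 + x) / (1 + x) ^ 2) := by
    field_simp; ring
  rw [key, sub_neg_eq_add]
  have hlt : Real.exp (-x) * (2 + x) / (1 + x) ^ 2 < Real.exp (-x) / x := by
    rw [div_lt_div_iff₀ (by positivity) hx]
    nlinarith
  linarith

lemma G_anti : StrictAntiOn G (Set.Ioi 0) := by
  apply strictAntiOn_of_deriv_neg (convex_Ioi 0)
  · intro y hy
    exact (hasDerivAt_G hy).continuousAt.continuousWithinAt
  · intro y hy
    rw [interior_Ioi] at hy
    rw [(hasDerivAt_G hy).deriv]
    exact G_deriv_neg hy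

lemma G_tendsto : Tendsto G atTop (𝓝 0) := by
  have h2 : Tendsto (fun x : ℝ => Real.exp (-x) / (1 + x)) atTop (𝓝 0) := by
    have ha : Tendsto (fun x : ℝ => Real.exp (-x)) atTop (𝓝 0) :=
      Real.tendsto_exp_neg_atTop_nhds_zero
    have hb : Tendsto (fun x : ℝ => (1 + x)⁻¹) atTop (𝓝 0) :=
      tendsto_inv_atTop_zero.comp (tendsto_atTop_add_const_left _ 1 tendsto_id)
    simpa [div_eq_mul_inv] using ha.mul hb
  have := E1_tendsto_zero.sub h2; simp only [sub_zero] at this; exact this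

lemma E1_gt {x : ℝ} (hx : 0 < x) : Real.exp (-x) / (1 + x) < E1 x := by
  have h1 : G (x + 1) ≥ 0 := by
    apply le_of_tendsto G_tendsto
    filter_upwards [eventually_gt_atTop (x + 1)] with y hy
    exact (G_anti (Set.mem_Ioi.mpr (by linarith)) (Set.mem_Ioi.mpr (by linarith)) hy).le
  have h2 : G (x + 1) < G x := G_anti hx (Set.mem_Ioi.mpr (by linarith)) (by linarith)
  have : 0 < G x := lt_of_le_of_lt h1 h2
  unfold G at this
  linarith

lemma hasDerivAt_h {x : ℝ} (hx : 0 < x) :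
    HasDerivAt (fun y : ℝ => y * Real.exp y * E1 y)
      ((Real.exp x + x * Real.exp x) * E1 x +
        x * Real.exp x * (-(Real.exp (-x) / x))) x := by
  have h1 : HasDerivAt (fun y : ℝ => y * Real.exp y) (Real.exp x + x * Real.exp x) x := by
    have := (hasDerivAt_id x).mul (Real.hasDerivAt_exp x)
    simp only [one_mul, id_eq] at this; exact this
  exact h1.mul (hasDerivAt_E1 hx)

lemma h_deriv_pos {x : ℝ} (hx : 0 < x) :
    0 < (Real.exp x + x * Real.exp x) * E1 x +
        x * Real.exp x * (-(Real.exp (-x) / x)) := by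
  have hy1 : (0:ℝ) < 1 + x := by linarith
  have hee : Real.exp x * Real.exp (-x) = 1 := by
    rw [← Real.exp_add]; simp
  have hgt : Real.exp (-x) < (1 + x) * E1 x := by
    have := (div_lt_iff₀ hy1).mp (E1_gt hx)
    linarith [this]
  have h3 : x * Real.exp x * (-(Real.exp (-x) / x)) = -1 := by
    field_simp
    nlinarith [hee]
  rw [h3]
  nlinarith [mul_lt_mul_of_pos_left hgt (Real.exp_pos x)]

lemma h_mono : StrictMonoOn (fun x : ℝ => x * Real.exp x * E1 x) (Set.Ioi 0) := by
  apply strictMonoOn_of_deriv_pos (convex_Ioi 0)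
  · intro y hy
    exact (hasDerivAt_h hy).continuousAt.continuousWithinAt
  · intro y hy
    rw [interior_Ioi] at hy
    rw [(hasDerivAt_h hy).deriv]
    exact h_deriv_pos hy

lemma E1_le_log {x : ℝ} (hx : 0 < x) (hx1 : x ≤ 1) : E1 x ≤ E1 1 - Real.log x := by
  rw [E1_eq hx, intervalIntegral.integral_symm]
  have hInt1 : IntervalIntegrable (fun t : ℝ => Real.exp (-t) / t) volume x 1 := by
    apply ContinuousOn.intervalIntegrable
    apply (contOn hx).mono
    rw [Set.uIcc_of_le hx1]
    exact Set.Icc_subset_Ici_self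
  have hInt2 : IntervalIntegrable (fun t : ℝ => 1 / t) volume x 1 := by
    apply ContinuousOn.intervalIntegrable
    apply ContinuousOn.div continuousOn_const continuousOn_id
    rw [Set.uIcc_of_le hx1]
    intro t ht; exact ne_of_gt (lt_of_lt_of_le hx ht.1)
  have hmono : (∫ t in x..(1:ℝ), Real.exp (-t) / t) ≤ ∫ t in x..(1:ℝ), 1 / t := by
    apply intervalIntegral.integral_mono_on hx1 hInt1 hInt2
    intro t ht
    have ht0 : 0 < t := lt_of_lt_of_le hx ht.1
    gcongr
    exact Real.exp_le_one_iff.mpr (by linarith)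
  have hlog : (∫ t in x..(1:ℝ), 1 / t) = -Real.log x := by
    rw [integral_one_div (by
      rw [Set.uIcc_of_le hx1]; intro h; exact absurd h.1 (not_le.mpr hx))]
    rw [one_div, Real.log_inv]
  linarith [hmono, hlog.le, hlog.ge]

lemma h_tendsto_zero :
    Tendsto (fun x : ℝ => x * Real.exp x * E1 x) (𝓝[>] 0) (𝓝 0) := by
  have t1 : Tendsto (fun x : ℝ => x * Real.exp x) (𝓝[>] (0:ℝ)) (𝓝 0) := by
    apply tendsto_nhdsWithin_of_tendsto_nhds
    have := (continuous_id.mul Real.continuous_exp).tendsto 0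
    convert this using 2 <;> simp
  have t2 : Tendsto (fun x : ℝ => Real.exp x * (Real.log x * x)) (𝓝[>] (0:ℝ)) (𝓝 0) := by
    have ha : Tendsto (fun x : ℝ => Real.exp x) (𝓝[>] (0:ℝ)) (𝓝 1) :=
      tendsto_nhdsWithin_of_tendsto_nhds (by simpa using Real.continuous_exp.tendsto 0)
    have hb : Tendsto (fun x : ℝ => Real.log x * x) (𝓝[>] (0:ℝ)) (𝓝 0) := by
      have := tendsto_log_mul_rpow_nhdsGT_zero one_pos
      simpa [Real.rpow_one] using this
    simpa using ha.mul hb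
  have tU : Tendsto (fun x : ℝ => x * Real.exp x * E1 1 - Real.exp x * (Real.log x * x))
      (𝓝[>] (0:ℝ)) (𝓝 0) := by
    simpa using (t1.mul_const (E1 1)).sub t2
  apply tendsto_of_tendsto_of_tendsto_of_le_of_le' tendsto_const_nhds tU
  · filter_upwards [self_mem_nhdsWithin] with x hx
    have hx0 : (0:ℝ) < x := hx
    have := E1_nonneg hx0
    positivity
  · filter_upwards [Ioo_mem_nhdsGT_of_mem (Set.mem_Ico.mpr ⟨le_refl 0, one_pos⟩)] with x hx
    obtain ⟨hx0, hx1⟩ := hx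
    have h1 : x * Real.exp x * E1 x ≤ x * Real.exp x * (E1 1 - Real.log x) := by
      apply mul_le_mul_of_nonneg_left (E1_le_log hx0 hx1.le)
      positivity
    calc x * Real.exp x * E1 x ≤ x * Real.exp x * (E1 1 - Real.log x) := h1
      _ = x * Real.exp x * E1 1 - Real.exp x * (Real.log x * x) := by ring

lemma h_tendsto_one :
    Tendsto (fun x : ℝ => x * Real.exp x * E1 x) atTop (𝓝 1) := by
  have tL : Tendsto (fun x : ℝ => x / (1 + x)) atTop (𝓝 1) := by
    have hb : Tendsto (fun x : ℝ => (1 + x)⁻¹) atTop (𝓝 0) :=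
      tendsto_inv_atTop_zero.comp (tendsto_atTop_add_const_left _ 1 tendsto_id)
    have : Tendsto (fun x : ℝ => 1 - (1 + x)⁻¹) atTop (𝓝 1) := by
      simpa using tendsto_const_nhds.sub hb
    apply this.congr'
    filter_upwards [eventually_gt_atTop (0:ℝ)] with x hx
    have : (0:ℝ) < 1 + x := by linarith
    field_simp
    ring
  apply tendsto_of_tendsto_of_tendsto_of_le_of_le' tL tendsto_const_nhds
  · filter_upwards [eventually_gt_atTop (0:ℝ)] with x hx
    have hee : Real.exp x * Real.exp (-x) = 1 := by rw [← Real.exp_add]; simp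
    have hy1 : (0:ℝ) < 1 + x := by linarith
    have h1 : x * Real.exp x * (Real.exp (-x) / (1 + x)) ≤ x * Real.exp x * E1 x := by
      apply mul_le_mul_of_nonneg_left (E1_gt hx).le
      positivity
    have h2 : x * Real.exp x * (Real.exp (-x) / (1 + x)) = x / (1 + x) := by
      field_simp
      nlinarith [hee]
    linarith [h1, h2.ge, h2.le]
  · filter_upwards [eventually_gt_atTop (0:ℝ)] with x hx
    have hee : Real.exp x * Real.exp (-x) = 1 := by rw [← Real.exp_add]; simp
    have h1 : x * Real.exp x * E1 x ≤ x * Real.exp x * (Real.exp (-x) / x) := by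
      apply mul_le_mul_of_nonneg_left (E1_le hx)
      positivity
    have h2 : x * Real.exp x * (Real.exp (-x) / x) = 1 := by
      field_simp
      nlinarith [hee]
    linarith

theorem xexpE1_mono_limits :
    StrictMonoOn (fun x : ℝ => x * Real.exp x * E1 x) (Set.Ioi 0) ∧
    Tendsto (fun x : ℝ => x * Real.exp x * E1 x) (nhdsWithin 0 (Set.Ioi 0)) (nhds 0) ∧
    Tendsto (fun x : ℝ => x * Real.exp x * E1 x) atTop (nhds 1) := by
  exact ⟨h_mono, h_tendsto_zero, h_tendsto_one⟩
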